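/- Let G be a countable (simple) graph with dual hypergraph G*. Then G has a subgraph G' in which every vertex has infinite degree in G' if and only if for every injective vertex labeling φ : V(G*) → ℕ there exists an infinite increasing β-path in G*. -/

import Mathlib

open Set Function

/-- A hypergraph on vertex type `V` is given by its edge family `E : Set (Set V)`.
`Uniform E k` says every edge has exactly `k` vertices. -/
def Uniform {V : Type*} (E : Set (Set V)) (k : ℕ) : Prop :=
  ∀ e ∈ E, e.Finite ∧ e.ncard = k

/-- A hypergraph is linear if any two distinct edges intersect in at most one vertex. -/
def LinearHG {V : Type*} (E : Set (Set V)) : Prop :=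
  ∀ e ∈ E, ∀ f ∈ E, e ≠ f → (e ∩ f).Subsingleton

/-- Property 𝒫ℓ: there is a nonempty `V'` such that every `v ∈ V'` belongs to infinitely
many edges `e` with `|V' ∩ e| ≥ ℓ`. -/
def PropP {V : Type*} (E : Set (Set V)) (l : ℕ) : Prop :=
  ∃ V' : Set V, V'.Nonempty ∧
    ∀ v ∈ V', {e | e ∈ E ∧ v ∈ e ∧ l ≤ (V' ∩ e).ncard}.Infinite

/-- Property 𝒫₂: there is a nonempty `V'` such that every `v ∈ V'` belongs to infinitely
many edges `e` with `|V' ∩ e| ≥ 2`. -/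
def PropP2 {V : Type*} (E : Set (Set V)) : Prop :=
  ∃ V' : Set V, V'.Nonempty ∧
    ∀ v ∈ V', {e | e ∈ E ∧ v ∈ e ∧ (V' ∩ e).Nontrivial}.Infinite

/-- Property 𝒫₂*: there is a nonempty `E' ⊆ E` such that for every `e ∈ E'` the set of
vertices of `e` also covered by some other edge of `E'` is infinite. -/
def PropP2Star {V : Type*} (E : Set (Set V)) : Prop :=
  ∃ E' : Set (Set V), E' ⊆ E ∧ E'.Nonempty ∧
    ∀ e ∈ E', {x | x ∈ e ∧ ∃ f ∈ E', f ≠ e ∧ x ∈ f}.Infinite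

/-- The edge family of the dual hypergraph: its vertices are the edges of `E`, and its
edges are the sets `v* = {e ∈ E : v ∈ e}` for `v : V`. -/
def dualEdges {V : Type*} (E : Set (Set V)) : Set (Set ↥E) :=
  {S | ∃ v : V, S = {e : ↥E | v ∈ (e : Set V)}}

/-- The edge family of a simple graph, viewed as a 2-uniform hypergraph. -/
def graphEdgeFamily {V : Type*} (G : SimpleGraph V) : Set (Set V) :=
  {s | ∃ a b, G.Adj a b ∧ s = ({a, b} : Set V)}

/-- The `i`-th edge `{v_{(k-1)i+1}, …, v_{(k-1)i+k}}` of the vertex sequence `v`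
(0-indexed: `v n` is the vertex `v_{n+1}`). -/
def pathEdge {V : Type*} (k : ℕ) (v : ℕ → V) (i : ℕ) : Set V :=
  (fun j => v ((k - 1) * i + j)) '' (Set.Iio k)

/-- An infinite path in a `k`-uniform hypergraph: a sequence of distinct vertices all of
whose consecutive `k`-blocks (overlapping in one vertex) are edges. -/
def IsInfPath {V : Type*} (E : Set (Set V)) (k : ℕ) (v : ℕ → V) : Prop :=
  Function.Injective v ∧ ∀ i, pathEdge k v i ∈ E

/-- An infinite β-path `v₁e₁v₂e₂…` (0-indexed: `v i`, `e i` are `v_{i+1}`, `e_{i+1}`):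
distinct vertices, distinct edges, and `vᵢ` belongs to `eᵢ₋₁` and `eᵢ` (with `e₀ = e₁`)
and to no other edge of the sequence. -/
structure IsInfBetaPath {V : Type*} (E : Set (Set V)) (v : ℕ → V) (e : ℕ → Set V) :
    Prop where
  vinj : Function.Injective v
  einj : Function.Injective e
  edges_mem : ∀ i, e i ∈ E
  mem_iff : ∀ i j, v i ∈ e j ↔ (j = i ∨ j + 1 = i)

/-- A finite β-path `v₁e₁v₂e₂…vₙeₙ` (0-indexed): distinct vertices, distinct edges, and
`vᵢ` belongs to `eᵢ₋₁` and `eᵢ` (with `e₀ = e₁`) and to no other edge of the sequence. -/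
def IsBetaPath {V : Type*} (E : Set (Set V)) {n : ℕ} (v : Fin n → V)
    (e : Fin n → Set V) : Prop :=
  Function.Injective v ∧ Function.Injective e ∧ (∀ i, e i ∈ E) ∧
    ∀ i j, v i ∈ e j ↔ ((j : ℕ) = (i : ℕ) ∨ (j : ℕ) + 1 = (i : ℕ))

/-- A β-cycle `e₁v₁e₂v₂…eₙvₙe₁` (0-indexed), `n ≥ 3`: distinct vertices, distinct edges,
and `vᵢ` belongs to `eᵢ` and `eᵢ₊₁` (cyclically) and to no other edge of the sequence. -/
def IsBetaCycle {V : Type*} (E : Set (Set V)) {n : ℕ} (v : Fin n → V)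
    (e : Fin n → Set V) : Prop :=
  3 ≤ n ∧ Function.Injective v ∧ Function.Injective e ∧ (∀ i, e i ∈ E) ∧
    ∀ i j, v i ∈ e j ↔ ((j : ℕ) = (i : ℕ) ∨ (j : ℕ) = ((i : ℕ) + 1) % n)

/-- The set of β-cycles of `E` involving the vertex `x`. -/
def BetaCyclesThroughVertex {V : Type*} (E : Set (Set V)) (x : V) :
    Set ((n : ℕ) × ((Fin n → V) × (Fin n → Set V))) :=
  {c | IsBetaCycle E c.2.1 c.2.2 ∧ ∃ i, c.2.1 i = x}

/-- The set of β-cycles of `E` involving the edge `f`. -/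
def BetaCyclesThroughEdge {V : Type*} (E : Set (Set V)) (f : Set V) :
    Set ((n : ℕ) × ((Fin n → V) × (Fin n → Set V))) :=
  {c | IsBetaCycle E c.2.1 c.2.2 ∧ ∃ i, c.2.2 i = f}

/-- `G` has a (nonempty) subgraph in which every vertex has infinite degree. -/
def HasInfDegSubgraph {V : Type*} (G : SimpleGraph V) : Prop :=
  ∃ G' : G.Subgraph, G'.verts.Nonempty ∧ ∀ v ∈ G'.verts, (G'.neighborSet v).Infinite

/-- `G` is a skeleton of the hypergraph with edge family `F`: it is generated by a set
`T ⊆ {(v, e) : v ∈ e ∈ F}` with all fibers `T_f` finite, its edges being the pairs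
`{v, w}` with `(v, e) ∈ T` and `w ∈ e`, `w ≠ v`. -/
def IsSkeleton {W : Type*} (F : Set (Set W)) (G : SimpleGraph W) : Prop :=
  ∃ T : Set (W × Set W),
    (∀ p ∈ T, p.1 ∈ p.2 ∧ p.2 ∈ F) ∧
    (∀ f ∈ F, {p ∈ T | p.2 = f}.Finite) ∧
    (∀ a b, G.Adj a b ↔
      a ≠ b ∧ ((∃ e, (a, e) ∈ T ∧ b ∈ e) ∨ (∃ e, (b, e) ∈ T ∧ a ∈ e)))

section Stmt9Aux
open Classical

variable {V : Type*} {G : SimpleGraph V}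

/-- The edge type of `G` as a hypergraph. -/
abbrev XE (G : SimpleGraph V) := ↥(graphEdgeFamily G)

lemma edge_spec (f : XE G) : ∃ a b, G.Adj a b ∧ (f : Set V) = {a, b} := f.2

def mkE {a b : V} (h : G.Adj a b) : XE G := ⟨{a, b}, ⟨a, b, h, rfl⟩⟩

@[simp] lemma mkE_coe {a b : V} (h : G.Adj a b) : ((mkE h : XE G) : Set V) = {a, b} := rfl

lemma pair_comm' (a b : V) : ({a, b} : Set V) = {b, a} := Set.pair_comm a b

lemma mem_pair_iff {x a b : V} : x ∈ ({a, b} : Set V) ↔ x = a ∨ x = b := by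
  simp [Set.mem_insert_iff]

lemma edge_ne (f : XE G) {x y : V} (h : (f : Set V) = {x, y}) : x ≠ y := by
  obtain ⟨a, b, hab, hs⟩ := f.2
  rintro rfl
  have hx : a ∈ ({x} : Set V) := by
    rw [Set.pair_eq_singleton] at h; rw [← h, hs]; simp
  have hy : b ∈ ({x} : Set V) := by
    rw [Set.pair_eq_singleton] at h; rw [← h, hs]; simp
  simp at hx hy
  exact hab.ne (hx.trans hy.symm)

lemma adj_of_edge (f : XE G) {x y : V} (h : (f : Set V) = {x, y}) : G.Adj x y := by
  obtain ⟨a, b, hab, hs⟩ := f.2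
  have hxy : x ≠ y := edge_ne f h
  have hx : x ∈ ({a, b} : Set V) := by rw [← hs, h]; simp
  have hy : y ∈ ({a, b} : Set V) := by rw [← hs, h]; simp
  rw [mem_pair_iff] at hx hy
  rcases hx with rfl | rfl <;> rcases hy with rfl | rfl
  · exact absurd rfl hxy
  · exact hab
  · exact hab.symm
  · exact absurd rfl hxy

lemma pair_right_eq {x y y' : V} (hy : y ≠ x) (hy' : y' ≠ x)
    (h : ({x, y} : Set V) = {x, y'}) : y = y' := by
  have : y ∈ ({x, y'} : Set V) := by rw [← h]; simp
  rw [mem_pair_iff] at this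
  tauto

/-- All rank data we need, extracted from the absence of an everywhere-infinite-degree
subgraph. -/
structure RankData (G : SimpleGraph V) where
  ρ : V → Ordinal.{0}
  ι : V → ℕ
  ιinj : Function.Injective ι
  nbrUp_fin : ∀ v : V, {u : V | G.Adj v u ∧ ρ v ≤ ρ u}.Finite

end Stmt9Aux
section Stmt9Rank
open Classical

variable {V : Type*}

noncomputable def Kset (G : SimpleGraph V) : Ordinal.{0} → Set V :=
  Ordinal.lt_wf.fix fun α IH =>
    {v | {u | G.Adj v u ∧ ∀ β (h : β < α), u ∉ IH β h}.Finite}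

lemma Kset_eq (G : SimpleGraph V) (α : Ordinal.{0}) :
    Kset G α = {v | {u | G.Adj v u ∧ ∀ β < α, u ∉ Kset G β}.Finite} := by
  unfold Kset
  rw [WellFounded.fix_eq]

lemma Kset_mono (G : SimpleGraph V) {α α' : Ordinal.{0}} (h : α ≤ α') :
    Kset G α ⊆ Kset G α' := by
  intro v hv
  rw [Kset_eq] at hv ⊢
  refine hv.subset ?_
  intro u hu
  exact ⟨hu.1, fun β hβ => hu.2 β (lt_of_lt_of_le hβ h)⟩

variable {G : SimpleGraph V}

lemma Kset_total [Countable V]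
    (hL : ¬ ∃ G' : G.Subgraph, G'.verts.Nonempty ∧
        ∀ v ∈ G'.verts, (G'.neighborSet v).Infinite) :
    ∀ v : V, ∃ α, v ∈ Kset G α := by
  by_contra hcon
  push_neg at hcon
  obtain ⟨v₀, hv₀⟩ := hcon
  set S : Set V := {v | ∀ α, v ∉ Kset G α} with hS
  have hv₀S : v₀ ∈ S := hv₀
  have key : ∀ v ∈ S, {u | G.Adj v u ∧ u ∈ S}.Infinite := by
    intro v hv
    by_contra hfin
    rw [Set.not_infinite] at hfin
    -- each non-S neighbor has a rank
    have hrank : ∀ u : {u | G.Adj v u ∧ u ∉ S}, ∃ α, (u : V) ∈ Kset G α := by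
      rintro ⟨u, _, hu⟩
      simp only [hS, Set.mem_setOf_eq, not_forall, not_not] at hu
      exact hu
    choose rk hrk using hrank
    have : v ∈ Kset G (⨆ u, rk u + 1) := by
      rw [Kset_eq]
      refine hfin.subset ?_
      intro u hu
      refine ⟨hu.1, ?_⟩
      by_contra huS
      have hu' : u ∈ {u | G.Adj v u ∧ u ∉ S} := ⟨hu.1, huS⟩
      have hbdd : BddAbove (Set.range fun w : {u | G.Adj v u ∧ u ∉ S} => rk w + 1) := by
        rw [Ordinal.bddAbove_iff_small]; exact small_range _
      have hlt : rk ⟨u, hu'⟩ < ⨆ w, rk w + 1 := by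
        refine lt_of_lt_of_le ?_ (le_ciSup hbdd ⟨u, hu'⟩)
        exact Order.lt_add_one_iff.mpr le_rfl
      exact hu.2 _ hlt (hrk ⟨u, hu'⟩)
    exact hv _ this
  apply hL
  refine ⟨{ verts := S, Adj := fun a b => G.Adj a b ∧ a ∈ S ∧ b ∈ S,
               adj_sub := fun h => h.1,
               edge_vert := fun h => h.2.1,
               symm := ⟨fun a b h => ⟨h.1.symm, h.2.2, h.2.1⟩⟩ }, ⟨v₀, hv₀S⟩, ?_⟩
  intro v hv
  exact (key v hv).mono (fun u hu => ⟨hu.1, hv, hu.2⟩)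

lemma exists_rankData [Countable V]
    (hL : ¬ ∃ G' : G.Subgraph, G'.verts.Nonempty ∧
        ∀ v ∈ G'.verts, (G'.neighborSet v).Infinite) :
    Nonempty (RankData G) := by
  obtain ⟨ι, hι⟩ := (countable_iff_exists_injective V).mp inferInstance
  have htot := Kset_total hL
  set ρ : V → Ordinal.{0} := fun v => sInf {α | v ∈ Kset G α} with hρ
  have hmem : ∀ v, v ∈ Kset G (ρ v) := fun v => csInf_mem (htot v)
  have hle : ∀ {u : V} {β}, u ∈ Kset G β ↔ ρ u ≤ β := by
    intro u β
    constructor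
    · intro h; exact csInf_le (OrderBot.bddBelow _) h
    · intro h; exact Kset_mono G h (hmem u)
  refine ⟨⟨ρ, ι, hι, ?_⟩⟩
  intro v
  have := hmem v
  rw [Kset_eq] at this
  refine this.subset ?_
  intro u hu
  refine ⟨hu.1, fun β hβ hmem' => ?_⟩
  have : ρ u ≤ β := hle.mp hmem'
  exact absurd (lt_of_le_of_lt (hu.2.trans this) hβ) (lt_irrefl _)

end Stmt9Rank
section Stmt9Batch
open Classical

variable {V : Type*} {G : SimpleGraph V}

lemma pair_eq_of_mem (f : XE G) {x z : V} (hx : x ∈ (f : Set V)) (hz : z ∈ (f : Set V))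
    (hxz : x ≠ z) : (f : Set V) = {x, z} := by
  obtain ⟨a, b, hab, hs⟩ := f.2
  rw [hs] at hx hz ⊢
  rw [mem_pair_iff] at hx hz
  rcases hx with rfl | rfl <;> rcases hz with rfl | rfl
  · exact absurd rfl hxz
  · rfl
  · exact Set.pair_comm _ _
  · exact absurd rfl hxz

/-- Lexicographic (rank, label) comparison on vertices. -/
def lexVle (R : RankData G) (x t : V) : Prop :=
  R.ρ x < R.ρ t ∨ (R.ρ x = R.ρ t ∧ R.ι x ≤ R.ι t)

lemma lexVle_total (R : RankData G) (x y : V) : lexVle R x y ∨ lexVle R y x := by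
  rcases lt_trichotomy (R.ρ x) (R.ρ y) with h | h | h
  · exact Or.inl (Or.inl h)
  · rcases le_total (R.ι x) (R.ι y) with h' | h'
    · exact Or.inl (Or.inr ⟨h, h'⟩)
    · exact Or.inr (Or.inr ⟨h.symm, h'⟩)
  · exact Or.inr (Or.inl h)

lemma lexVle_trans (R : RankData G) {x y z : V} (h1 : lexVle R x y) (h2 : lexVle R y z) :
    lexVle R x z := by
  rcases h1 with h1 | ⟨h1, h1'⟩ <;> rcases h2 with h2 | ⟨h2, h2'⟩
  · exact Or.inl (h1.trans h2)
  · exact Or.inl (h2 ▸ h1)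
  · exact Or.inl (h1 ▸ h2)
  · exact Or.inr ⟨h1.trans h2, h1'.trans h2'⟩

lemma lexVle_rho (R : RankData G) {x y : V} (h : lexVle R x y) : R.ρ x ≤ R.ρ y := by
  rcases h with h | ⟨h, _⟩
  · exact h.le
  · exact h.le

variable (R : RankData G)

lemma tope_spec (f : XE G) :
    ∃ t, t ∈ (f : Set V) ∧ ∀ x ∈ (f : Set V), lexVle R x t := by
  obtain ⟨a, b, hab, hs⟩ := f.2
  rcases lexVle_total R a b with h | h
  · refine ⟨b, by rw [hs]; simp, ?_⟩
    intro x hx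
    rw [hs, mem_pair_iff] at hx
    rcases hx with rfl | rfl
    · exact h
    · exact Or.inr ⟨rfl, le_rfl⟩
  · refine ⟨a, by rw [hs]; simp, ?_⟩
    intro x hx
    rw [hs, mem_pair_iff] at hx
    rcases hx with rfl | rfl
    · exact Or.inr ⟨rfl, le_rfl⟩
    · exact h

noncomputable def tope (f : XE G) : V := Classical.choose (tope_spec R f)

lemma tope_mem (f : XE G) : tope R f ∈ (f : Set V) := (Classical.choose_spec (tope_spec R f)).1

lemma tope_max (f : XE G) : ∀ x ∈ (f : Set V), lexVle R x (tope R f) :=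
  (Classical.choose_spec (tope_spec R f)).2

lemma tope_unique {f : XE G} {x : V} (hx : x ∈ (f : Set V))
    (h1 : R.ρ x = R.ρ (tope R f)) (h2 : R.ι x = R.ι (tope R f)) : x = tope R f :=
  R.ιinj h2

lemma tope_eq_of_lt {f : XE G} {x y : V} (hs : (f : Set V) = {x, y})
    (hlt : R.ρ y < R.ρ x) : tope R f = x := by
  have hm := tope_mem R f
  rw [hs, mem_pair_iff] at hm
  rcases hm with h | h
  · exact h
  · exfalso
    have := tope_max R f x (by rw [hs]; simp)
    rw [h] at this
    rcases this with h' | ⟨h', _⟩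
    · exact absurd (h'.trans hlt) (lt_irrefl _)
    · rw [h'] at hlt; exact lt_irrefl _ hlt

/-- The "upward star" of a vertex: edges containing it whose other end has rank at
least as big. -/
def Fstar (x : V) : Set (XE G) := {f | ∃ y, R.ρ x ≤ R.ρ y ∧ (f : Set V) = {x, y}}

lemma Fstar_finite (x : V) : (Fstar R x).Finite := by
  have h := (R.nbrUp_fin x).dependent_image
    (F := fun u (hu : u ∈ {u | G.Adj x u ∧ R.ρ x ≤ R.ρ u}) => (mkE hu.1 : XE G))
  refine h.subset ?_
  rintro f ⟨y, hy, hs⟩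
  have hxy : x ≠ y := edge_ne f hs
  have hadj : G.Adj x y := adj_of_edge f hs
  exact ⟨y, ⟨hadj, hy⟩, Subtype.ext hs.symm⟩

/-- Edges sharing a vertex. -/
def Touch (f g : XE G) : Prop := ∃ x, x ∈ (f : Set V) ∧ x ∈ (g : Set V)

/-- Finitely many "anchor continuations" of an edge. -/
def U0 (f : XE G) : Set (XE G) := {g | g ≠ f ∧ ∃ x ∈ (f : Set V), g ∈ Fstar R x}

lemma edge_carrier_finite (f : XE G) : (f : Set V).Finite := by
  obtain ⟨a, b, _, hs⟩ := f.2
  rw [hs]; exact (Set.finite_singleton b).insert a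

lemma U0_finite (f : XE G) : (U0 R f).Finite := by
  refine (Set.Finite.biUnion (edge_carrier_finite f) (fun x _ => Fstar_finite R x)).subset ?_
  rintro g ⟨_, x, hx, hg⟩
  exact Set.mem_biUnion hx hg

/-- Triggered: touches a previously emitted edge. -/
def Trig (F : Set (XE G)) (g : XE G) : Prop := ∃ f ∈ F, Touch f g

/-- Membership in the batch generated by `d` over already-emitted set `F`. -/
inductive InBatch (F : Set (XE G)) (d : XE G) : XE G → Prop
  | prim : InBatch F d d
  | pull {g f : XE G} : InBatch F d g → Trig F g → f ∈ U0 R g → f ∉ F → InBatch F d f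

lemma inBatch_finite {F : Set (XE G)} (hF : F.Finite) (d : XE G) :
    {x | InBatch R F d x}.Finite := by
  classical
  set VF : Set V := ⋃ f ∈ F, (f : Set V) with hVF
  have hVFfin : VF.Finite := hF.biUnion (fun f _ => edge_carrier_finite f)
  set T0 : Set (XE G) := ⋃ v ∈ VF, Fstar R v with hT0
  have hT0fin : T0.Finite := hVFfin.biUnion (fun v _ => Fstar_finite R v)
  set Base : Set (XE G) := {d} ∪ U0 R d ∪ T0 with hBase
  have hBasefin : Base.Finite := ((Set.finite_singleton d).union (U0_finite R d)).union hT0fin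
  set ES : Set V := ⋃ g ∈ Base, (g : Set V) with hES
  have hESfin : ES.Finite := hBasefin.biUnion (fun g _ => edge_carrier_finite g)
  have main : ∀ x, InBatch R F d x →
      x = d ∨ x ∈ U0 R d ∨ x ∈ T0 ∨ ∃ z ∈ ES, z ∉ VF ∧ x ∈ Fstar R z := by
    intro x hx
    induction hx with
    | prim => exact Or.inl rfl
    | @pull p g hp htrig hU _ ih =>
      obtain ⟨hne, z, hzp, hgz⟩ := hU
      by_cases hzVF : z ∈ VF
      · refine Or.inr (Or.inr (Or.inl ?_))
        exact Set.mem_biUnion hzVF hgz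
      · -- p touches VF at some w ≠ z, so (p : Set V) = {z, w}
        obtain ⟨f, hfF, w, hwf, hwp⟩ := htrig
        have hwVF : w ∈ VF := Set.mem_biUnion hfF hwf
        have hzw : z ≠ w := fun h => hzVF (h ▸ hwVF)
        have hpcar : (p : Set V) = {z, w} := pair_eq_of_mem p hzp hwp hzw
        rcases ih with rfl | hpU | hpT | ⟨z', hz'ES, hz'VF, hpF⟩
        · -- p = d
          refine Or.inr (Or.inr (Or.inr ⟨z, ?_, hzVF, hgz⟩))
          exact Set.mem_biUnion (show p ∈ Base by rw [hBase]; left; left; rfl) hzp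
        · refine Or.inr (Or.inr (Or.inr ⟨z, ?_, hzVF, hgz⟩))
          exact Set.mem_biUnion (show p ∈ Base by rw [hBase]; left; right; exact hpU) hzp
        · refine Or.inr (Or.inr (Or.inr ⟨z, ?_, hzVF, hgz⟩))
          exact Set.mem_biUnion (show p ∈ Base by rw [hBase]; right; exact hpT) hzp
        · -- p ∈ Fstar R z', z' ∉ VF : then z' = z
          obtain ⟨y', _, hpcar'⟩ := hpF
          have hz'p : z' ∈ (p : Set V) := by rw [hpcar']; simp
          rw [hpcar, mem_pair_iff] at hz'p
          rcases hz'p with rfl | rfl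
          · exact Or.inr (Or.inr (Or.inr ⟨z', hz'ES, hz'VF, hgz⟩))
          · exact absurd hwVF hz'VF
  have : {x | InBatch R F d x} ⊆ Base ∪ ⋃ z ∈ ES, Fstar R z := by
    intro x hx
    rcases main x hx with rfl | h | h | ⟨z, hz, _, hzf⟩
    · left; rw [hBase]; left; left; rfl
    · left; rw [hBase]; left; right; exact h
    · left; rw [hBase]; right; exact h
    · right; exact Set.mem_biUnion hz hzf
  exact (hBasefin.union (hESfin.biUnion (fun z _ => Fstar_finite R z))).subset this

end Stmt9Batch
section Stmt9Emit
open Classical List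

attribute [local instance] Classical.propDecidable

variable {V : Type*} {G : SimpleGraph V}

lemma idxOf_append_left {α : Type*} [BEq α] [LawfulBEq α] {l1 l2 : List α} {x : α} (h : x ∈ l1) :
    (l1 ++ l2).idxOf x = l1.idxOf x := by
  induction l1 with
  | nil => simp at h
  | cons a t ih =>
    by_cases hax : a = x
    · subst hax; simp [List.idxOf_cons]
    · rw [List.mem_cons] at h
      rcases h with h | h
      · exact absurd h.symm hax
      · simp only [List.cons_append, List.idxOf_cons]
        have : (a == x) = false := by simp [hax]
        rw [this]
        simp [ih h]

lemma idxOf_append_right {α : Type*} [BEq α] [LawfulBEq α] {l1 l2 : List α} {x : α} (h : x ∉ l1) :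
    (l1 ++ l2).idxOf x = l1.length + l2.idxOf x := by
  induction l1 with
  | nil => simp
  | cons a t ih =>
    have hax : a ≠ x := fun hh => h (by simp [hh])
    have hxt : x ∉ t := fun hh => h (by simp [hh])
    simp only [List.cons_append, List.idxOf_cons]
    have : (a == x) = false := by simp [hax]
    rw [this]
    simp only [cond_false, List.length_cons, ih hxt]
    omega

variable (R : RankData G)

/-- Sorting predicate for the closed part: `f` may come before `g` when the top of `g`
is lexicographically at most the top of `f`. -/
noncomputable def kgeb (f g : XE G) : Bool := decide (lexVle R (tope R g) (tope R f))

noncomputable def batchFin (prev : List (XE G)) (d : XE G) : Finset (XE G) :=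
  Set.Finite.toFinset
    ((inBatch_finite R (List.finite_toSet prev) d).subset
      (fun x (hx : x ∈ {x | InBatch R {f | f ∈ prev} d x ∧ x ∉ prev}) => hx.1))

lemma mem_batchFin {prev : List (XE G)} {d x : XE G} :
    x ∈ batchFin R prev d ↔ InBatch R {f | f ∈ prev} d x ∧ x ∉ prev := by
  simp [batchFin, Set.Finite.mem_toFinset]

noncomputable def cleanL (prev : List (XE G)) (d : XE G) : List (XE G) :=
  ((batchFin R prev d).filter (fun g => ¬ Trig {f | f ∈ prev} g)).toList

noncomputable def closedL (prev : List (XE G)) (d : XE G) : List (XE G) :=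
  (((batchFin R prev d).filter (fun g => Trig {f | f ∈ prev} g)).toList).mergeSort (kgeb R)

noncomputable def batchL (prev : List (XE G)) (d : XE G) : List (XE G) :=
  if d ∈ prev then [] else cleanL R prev d ++ closedL R prev d

lemma mem_closedL {prev : List (XE G)} {d x : XE G} :
    x ∈ closedL R prev d ↔ x ∈ batchFin R prev d ∧ Trig {f | f ∈ prev} x := by
  rw [closedL, (List.mergeSort_perm _ _).mem_iff]
  simp

lemma mem_cleanL {prev : List (XE G)} {d x : XE G} :
    x ∈ cleanL R prev d ↔ x ∈ batchFin R prev d ∧ ¬ Trig {f | f ∈ prev} x := by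
  rw [cleanL]; simp

lemma mem_batchL {prev : List (XE G)} {d x : XE G} (hd : d ∉ prev) :
    x ∈ batchL R prev d ↔ InBatch R {f | f ∈ prev} d x ∧ x ∉ prev := by
  rw [batchL, if_neg hd]
  simp only [List.mem_append, mem_cleanL, mem_closedL, mem_batchFin]
  by_cases h : Trig {f | f ∈ prev} x <;> tauto

lemma nodup_batchL (prev : List (XE G)) (d : XE G) : (batchL R prev d).Nodup := by
  rw [batchL]
  split
  · exact List.nodup_nil
  · refine List.Nodup.append (Finset.nodup_toList _) ?_ ?_
    · exact ((List.mergeSort_perm _ _).nodup_iff).mpr (Finset.nodup_toList _)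
    · intro x hx hx'
      rw [cleanL] at hx
      rw [mem_closedL R] at hx'
      simp at hx
      exact hx.2 hx'.2

lemma batchL_disjoint_prev {prev : List (XE G)} {d x : XE G} (hx : x ∈ batchL R prev d) :
    x ∉ prev := by
  by_cases hd : d ∈ prev
  · rw [batchL, if_pos hd] at hx; simp at hx
  · exact ((mem_batchL R hd).mp hx).2

variable (en : ℕ → XE G)

noncomputable def EmL : ℕ → List (XE G)
  | 0 => []
  | n + 1 => EmL n ++ batchL R (EmL n) (en n)

lemma EmL_prefix {n m : ℕ} (h : n ≤ m) : EmL R en n <+: EmL R en m := by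
  induction m with
  | zero => rw [Nat.le_zero] at h; subst h; exact List.prefix_refl _
  | succ m ih =>
    rcases Nat.lt_or_ge n (m+1) with h' | h'
    · exact (ih (Nat.lt_succ_iff.mp h')).trans (List.prefix_append _ _)
    · have : n = m + 1 := le_antisymm h h'
      subst this; exact List.prefix_refl _

lemma EmL_nodup (n : ℕ) : (EmL R en n).Nodup := by
  induction n with
  | zero => exact List.nodup_nil
  | succ n ih =>
    refine List.Nodup.append ih (nodup_batchL R _ _) ?_
    intro x hx hx'
    exact batchL_disjoint_prev R hx' hx

lemma EmL_total : ∀ x : XE G, (∃ n, x = en n) → ∃ n, x ∈ EmL R en n := by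
  rintro x ⟨n, rfl⟩
  by_cases h : en n ∈ EmL R en n
  · exact ⟨n, h⟩
  · refine ⟨n + 1, ?_⟩
    show en n ∈ EmL R en n ++ batchL R (EmL R en n) (en n)
    rw [List.mem_append]
    right
    rw [mem_batchL R h]
    exact ⟨InBatch.prim, h⟩

end Stmt9Emit
section Stmt9Stage
open Classical List

attribute [local instance] Classical.propDecidable

variable {V : Type*} {G : SimpleGraph V} (R : RankData G) (en : ℕ → XE G)
variable (htot : ∀ x : XE G, ∃ n, x ∈ EmL R en n)

noncomputable def stg (x : XE G) : ℕ := Nat.find (htot x)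

lemma stg_mem (x : XE G) : x ∈ EmL R en (stg R en htot x) := Nat.find_spec (htot x)

lemma stg_le {x : XE G} {n : ℕ} (h : x ∈ EmL R en n) : stg R en htot x ≤ n :=
  Nat.find_le h

lemma mem_EmL_iff {x : XE G} {n : ℕ} : x ∈ EmL R en n ↔ stg R en htot x ≤ n := by
  constructor
  · exact stg_le R en htot
  · intro h
    exact (EmL_prefix R en h).subset (stg_mem R en htot x)

lemma stg_pos (x : XE G) : 0 < stg R en htot x := by
  rcases Nat.eq_zero_or_pos (stg R en htot x) with h | h
  · have := stg_mem R en htot x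
    rw [h] at this
    simp [EmL] at this
  · exact h

noncomputable def evt (x : XE G) : ℕ := stg R en htot x - 1

lemma stg_eq_evt (x : XE G) : stg R en htot x = evt R en htot x + 1 := by
  have := stg_pos R en htot x
  unfold evt
  omega

lemma mem_batch_self (x : XE G) :
    x ∈ batchL R (EmL R en (evt R en htot x)) (en (evt R en htot x)) := by
  have h1 : x ∈ EmL R en (evt R en htot x + 1) := by
    rw [← stg_eq_evt]
    exact stg_mem R en htot x
  have h2 : x ∉ EmL R en (evt R en htot x) := by
    rw [mem_EmL_iff R en htot, stg_eq_evt R en htot x]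
    omega
  show x ∈ batchL _ _ _
  have : EmL R en (evt R en htot x + 1)
      = EmL R en (evt R en htot x) ++ batchL R (EmL R en (evt R en htot x)) (en (evt R en htot x)) := rfl
  rw [this, List.mem_append] at h1
  tauto

lemma en_evt_not_mem (x : XE G) :
    en (evt R en htot x) ∉ EmL R en (evt R en htot x) := by
  intro h
  have := mem_batch_self R en htot x
  rw [batchL, if_pos h] at this
  simp at this

noncomputable def bPos (x : XE G) : ℕ :=
  (batchL R (EmL R en (evt R en htot x)) (en (evt R en htot x))).idxOf x

noncomputable def hval (x : XE G) : ℕ := (EmL R en (evt R en htot x)).length + bPos R en htot x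

lemma hval_lt_len (x : XE G) : hval R en htot x < (EmL R en (stg R en htot x)).length := by
  have hmem := mem_batch_self R en htot x
  have hlt := List.idxOf_lt_length_iff.mpr hmem
  rw [stg_eq_evt R en htot x]
  show _ < (EmL R en (evt R en htot x) ++ _).length
  rw [List.length_append]
  exact Nat.add_lt_add_left hlt _

lemma len_le_hval (x : XE G) : (EmL R en (evt R en htot x)).length ≤ hval R en htot x :=
  Nat.le_add_right _ _

lemma hval_mono {x y : XE G} (h : stg R en htot x < stg R en htot y) :
    hval R en htot x < hval R en htot y := by
  have h1 := hval_lt_len R en htot x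
  have h2 := len_le_hval R en htot y
  have h3 : (EmL R en (stg R en htot x)).length ≤ (EmL R en (evt R en htot y)).length := by
    refine (EmL_prefix R en ?_).length_le
    have := stg_eq_evt R en htot y
    omega
  omega

lemma stg_mono {x y : XE G} (h : hval R en htot x < hval R en htot y) :
    stg R en htot x ≤ stg R en htot y := by
  by_contra hc
  push_neg at hc
  exact absurd (hval_mono R en htot hc) (by omega)

lemma hval_inj : Function.Injective (hval R en htot) := by
  intro x y h
  have hs : stg R en htot x = stg R en htot y := by
    rcases lt_trichotomy (stg R en htot x) (stg R en htot y) with h' | h' | h'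
    · exact absurd (hval_mono R en htot h') (by omega)
    · exact h'
    · exact absurd (hval_mono R en htot h') (by omega)
  have hevt : evt R en htot x = evt R en htot y := by unfold evt; omega
  have hb : bPos R en htot x = bPos R en htot y := by
    unfold hval at h
    rw [hevt] at h
    omega
  unfold bPos at hb
  have hmy := mem_batch_self R en htot y
  rw [← hevt] at hb hmy
  exact (List.idxOf_inj (mem_batch_self R en htot x)).mp hb

/-- An edge is closed if it touches an edge emitted in a strictly earlier batch. -/
def ClosedAt (x : XE G) : Prop := Trig {f | f ∈ EmL R en (evt R en htot x)} x

end Stmt9Stage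
section Stmt9P
open Classical List

attribute [local instance] Classical.propDecidable

variable {V : Type*} {G : SimpleGraph V} (R : RankData G) (en : ℕ → XE G)
variable (htot : ∀ x : XE G, ∃ n, x ∈ EmL R en n)

lemma mem_closed_part {x : XE G} (hx : ClosedAt R en htot x) :
    x ∈ closedL R (EmL R en (evt R en htot x)) (en (evt R en htot x)) := by
  have hBx := mem_batch_self R en htot x
  have hd := en_evt_not_mem R en htot x
  rw [batchL, if_neg hd, List.mem_append] at hBx
  rcases hBx with h | h
  · rw [mem_cleanL] at h
    exact absurd hx h.2
  · exact h

lemma closed_of_after {x y : XE G} (hst : stg R en htot x = stg R en htot y)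
    (hx : ClosedAt R en htot x) (hlt : hval R en htot x < hval R en htot y) :
    ClosedAt R en htot y := by
  have hevt : evt R en htot x = evt R en htot y := by unfold evt; omega
  set prev := EmL R en (evt R en htot x) with hprev
  set d := en (evt R en htot x) with hdd
  have hd : d ∉ prev := en_evt_not_mem R en htot x
  have hBdef : batchL R prev d = cleanL R prev d ++ closedL R prev d := by
    rw [batchL, if_neg hd]
  have hxcl : x ∈ closedL R prev d := mem_closed_part R en htot hx
  have hxnc : x ∉ cleanL R prev d := by
    intro h
    rw [mem_cleanL] at h
    exact h.2 hx
  have hbx : bPos R en htot x = (cleanL R prev d).length + (closedL R prev d).idxOf x := by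
    unfold bPos
    rw [← hprev, ← hdd, hBdef, idxOf_append_right hxnc]
  have hby : bPos R en htot x < bPos R en htot y := by
    unfold hval at hlt
    rw [hevt] at hlt
    omega
  have hycl : y ∈ closedL R prev d := by
    by_contra hyc
    have hBy := mem_batch_self R en htot y
    rw [← hevt] at hBy
    rw [hBdef, List.mem_append] at hBy
    rcases hBy with h | h
    · have hby' : bPos R en htot y = (cleanL R prev d).idxOf y := by
        unfold bPos
        rw [← hevt, ← hprev, ← hdd, hBdef, idxOf_append_left h]
      have : (cleanL R prev d).idxOf y < (cleanL R prev d).length :=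
        List.idxOf_lt_length_iff.mpr h
      omega
    · exact hyc h
  rw [mem_closedL] at hycl
  show Trig _ y
  rw [← hevt]
  exact hycl.2

lemma kgeb_trans : ∀ a b c : XE G, kgeb R a b = true → kgeb R b c = true → kgeb R a c = true := by
  intro a b c h1 h2
  rw [kgeb, decide_eq_true_iff] at h1 h2 ⊢
  exact lexVle_trans R h2 h1

lemma kgeb_total : ∀ a b : XE G, (kgeb R a b || kgeb R b a) = true := by
  intro a b
  rcases lexVle_total R (tope R a) (tope R b) with h | h <;>
    simp [kgeb, h]

lemma lex_of_after {x y : XE G} (hst : stg R en htot x = stg R en htot y)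
    (hx : ClosedAt R en htot x) (hlt : hval R en htot x < hval R en htot y) :
    lexVle R (tope R y) (tope R x) := by
  have hy : ClosedAt R en htot y := closed_of_after R en htot hst hx hlt
  have hevt : evt R en htot x = evt R en htot y := by unfold evt; omega
  set prev := EmL R en (evt R en htot x) with hprev
  set d := en (evt R en htot x) with hdd
  have hd : d ∉ prev := en_evt_not_mem R en htot x
  have hBdef : batchL R prev d = cleanL R prev d ++ closedL R prev d := by
    rw [batchL, if_neg hd]
  have hxcl : x ∈ closedL R prev d := mem_closed_part R en htot hx
  have hycl : y ∈ closedL R prev d := by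
    have := mem_closed_part R en htot hy
    rw [← hevt] at this
    exact this
  have hxnc : x ∉ cleanL R prev d := fun h => ((mem_cleanL R).mp h).2 hx
  have hync : y ∉ cleanL R prev d := by
    intro h
    refine ((mem_cleanL R).mp h).2 ?_
    show Trig _ y
    have := hy
    unfold ClosedAt at this
    rw [← hevt] at this
    exact this
  have hbx : bPos R en htot x = (cleanL R prev d).length + (closedL R prev d).idxOf x := by
    unfold bPos
    rw [← hprev, ← hdd, hBdef, idxOf_append_right hxnc]
  have hby : bPos R en htot y = (cleanL R prev d).length + (closedL R prev d).idxOf y := by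
    unfold bPos
    rw [← hevt, ← hprev, ← hdd, hBdef, idxOf_append_right hync]
  have hij : (closedL R prev d).idxOf x < (closedL R prev d).idxOf y := by
    have : bPos R en htot x < bPos R en htot y := by
      unfold hval at hlt
      rw [hevt] at hlt
      omega
    omega
  have hsorted : List.Pairwise (fun a b => kgeb R a b = true) (closedL R prev d) := by
    unfold closedL
    exact List.pairwise_mergeSort (kgeb_trans R) (kgeb_total R) _
  have hi := List.idxOf_lt_length_iff.mpr hxcl
  have hj := List.idxOf_lt_length_iff.mpr hycl
  have hrel := (List.pairwise_iff_getElem.mp hsorted) _ _ hi hj hij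
  rw [List.getElem_idxOf hi, List.getElem_idxOf hj] at hrel
  rw [kgeb, decide_eq_true_iff] at hrel
  exact hrel

lemma closed_of_cross {x y : XE G} (h : stg R en htot x < stg R en htot y)
    (ht : Touch x y) : ClosedAt R en htot y := by
  refine ⟨x, ?_, ht⟩
  show x ∈ EmL R en (evt R en htot y)
  rw [mem_EmL_iff R en htot]
  have := stg_eq_evt R en htot y
  omega

lemma U0_le_stg {g f : XE G} (hg : ClosedAt R en htot g) (hf : f ∈ U0 R g) :
    stg R en htot f ≤ stg R en htot g := by
  set n := evt R en htot g with hn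
  have hd : en n ∉ EmL R en n := en_evt_not_mem R en htot g
  have hmem := mem_batch_self R en htot g
  rw [← hn] at hmem
  have hInB := ((mem_batchL R hd).mp hmem).1
  by_cases hfm : f ∈ EmL R en n
  · have : stg R en htot f ≤ n := stg_le R en htot hfm
    have := stg_eq_evt R en htot g
    omega
  · have hInBf : InBatch R {f | f ∈ EmL R en n} (en n) f :=
      InBatch.pull hInB hg hf hfm
    have hfB : f ∈ batchL R (EmL R en n) (en n) := by
      rw [mem_batchL R hd]
      exact ⟨hInBf, hfm⟩
    have : f ∈ EmL R en (n + 1) := by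
      show f ∈ EmL R en n ++ batchL R (EmL R en n) (en n)
      rw [List.mem_append]; tauto
    have h1 : stg R en htot f ≤ n + 1 := stg_le R en htot this
    have h2 := stg_eq_evt R en htot g
    omega

end Stmt9P
section Stmt9Kill
open Classical List

variable {V : Type*} {G : SimpleGraph V}

lemma stab {α : Type*} [LinearOrder α] [WellFoundedLT α] (f : ℕ → α) (i₀ : ℕ)
    (h : ∀ i, i₀ ≤ i → f (i + 1) ≤ f i) :
    ∃ i₁, i₀ ≤ i₁ ∧ ∀ j, i₁ ≤ j → f j = f i₁ := by
  have haux : ∀ i j, i₀ ≤ i → i ≤ j → f j ≤ f i := by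
    intro i j hi hij
    induction j, hij using Nat.le_induction with
    | base => exact le_rfl
    | succ m hm ih => exact (h m (hi.trans hm)).trans ih
  obtain ⟨m, ⟨i₁, hi₁, rfl⟩, hmin⟩ :=
    (wellFounded_lt (α := α)).has_min {a | ∃ i, i₀ ≤ i ∧ f i = a} ⟨f i₀, i₀, le_rfl, rfl⟩
  refine ⟨i₁, hi₁, fun j hj => ?_⟩
  have h1 : f j ≤ f i₁ := haux i₁ j hi₁ hj
  have h2 : ¬ f j < f i₁ := hmin (f j) ⟨j, hi₁.trans hj, rfl⟩
  exact le_antisymm h1 (not_lt.mp h2)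

theorem kill (R : RankData G) (en : ℕ → XE G)
    (htot : ∀ x : XE G, ∃ n, x ∈ EmL R en n) :
    ¬ ∃ (w : ℕ → V) (E : ℕ → XE G), Function.Injective w ∧
      (∀ i, (E i : Set V) = {w i, w (i + 1)}) ∧
      (∀ i, hval R en htot (E i) < hval R en htot (E (i + 1))) := by
  rintro ⟨w, E, hwinj, hcar, hup⟩
  have hmono : StrictMono fun i => hval R en htot (E i) := strictMono_nat_of_lt_succ hup
  have hEinj : Function.Injective E := fun i j hij => by
    by_contra hne
    rcases lt_or_gt_of_ne hne with h | h
    · have := hmono h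
      simp only [hij] at this
      omega
    · have := hmono h
      simp only [hij] at this
      omega
  have hshared : ∀ i, w (i + 1) ∈ (E i : Set V) ∧ w (i + 1) ∈ (E (i + 1) : Set V) := by
    intro i
    constructor
    · rw [hcar i]; simp
    · rw [hcar (i + 1)]; simp
  have hsmono : ∀ i j, i ≤ j → stg R en htot (E i) ≤ stg R en htot (E j) := by
    intro i j hij
    rcases eq_or_lt_of_le hij with rfl | h
    · exact le_rfl
    · exact stg_mono R en htot (hmono h)
  -- there is a batch crossing
  have hcross : ∃ j, stg R en htot (E j) < stg R en htot (E (j + 1)) := by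
    by_contra hc
    push_neg at hc
    have hconst : ∀ j, stg R en htot (E j) = stg R en htot (E 0) := by
      intro j
      induction j with
      | zero => rfl
      | succ m ih => exact le_antisymm (ih ▸ hc m) (ih ▸ hsmono 0 (m+1) (by omega))
    have hmemall : ∀ j, E j ∈ EmL R en (stg R en htot (E 0)) := by
      intro j
      rw [mem_EmL_iff R en htot, hconst j]
    have hfin : (Set.range E).Finite :=
      (List.finite_toSet (EmL R en (stg R en htot (E 0)))).subset
        (by rintro x ⟨j, rfl⟩; exact hmemall j)
    exact (Set.infinite_range_of_injective hEinj) hfin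
  obtain ⟨j₀, hj₀⟩ := hcross
  set i₀ := j₀ + 1 with hi₀
  -- all edges from i₀ on are closed
  have hclosed : ∀ i, i₀ ≤ i → ClosedAt R en htot (E i) := by
    intro i hi
    induction i, hi using Nat.le_induction with
    | base =>
      exact closed_of_cross R en htot hj₀ ⟨w (j₀ + 1), (hshared j₀).1, (hshared j₀).2⟩
    | succ m hm ih =>
      rcases eq_or_lt_of_le (hsmono m (m + 1) (by omega)) with he | hlt
      · exact closed_of_after R en htot he ih (hup m)
      · exact closed_of_cross R en htot hlt ⟨w (m + 1), (hshared m).1, (hshared m).2⟩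
  -- the top of each edge decreases lexicographically
  have hlex : ∀ i, i₀ ≤ i → lexVle R (tope R (E (i + 1))) (tope R (E i)) := by
    intro i hi
    rcases le_or_gt (R.ρ (w (i + 1))) (R.ρ (w (i + 2))) with h | h
    · -- anchor step
      have hFst : E (i + 1) ∈ Fstar R (w (i + 1)) := ⟨w (i + 2), h, hcar (i + 1)⟩
      have hU0 : E (i + 1) ∈ U0 R (E i) := by
        refine ⟨?_, w (i + 1), (hshared i).1, hFst⟩
        intro hEq
        exact absurd (hup i) (by rw [hEq]; omega)
      have hle := U0_le_stg R en htot (hclosed i hi) hU0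
      have hge := hsmono i (i + 1) (by omega)
      have heq : stg R en htot (E i) = stg R en htot (E (i + 1)) := le_antisymm hge hle
      exact lex_of_after R en htot heq (hclosed i hi) (hup i)
    · -- descending step
      have htopeq : tope R (E (i + 1)) = w (i + 1) := tope_eq_of_lt R (hcar (i + 1)) h
      rw [htopeq]
      exact tope_max R (E i) _ (hshared i).1
  -- stabilize the rank of the tops
  obtain ⟨i₁, hi₁0, hi₁⟩ := stab (fun i => R.ρ (tope R (E i))) i₀
    (fun i hi => lexVle_rho R (hlex i hi))
  -- stabilize the label of the tops
  have hIdec : ∀ i, i₁ ≤ i → R.ι (tope R (E (i + 1))) ≤ R.ι (tope R (E i)) := by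
    intro i hi
    have h := hlex i (hi₁0.trans hi)
    rcases h with h | ⟨_, h⟩
    · exfalso
      have e1 := hi₁ i hi
      have e2 := hi₁ (i + 1) (by omega)
      rw [e1, e2] at h
      exact lt_irrefl _ h
    · exact h
  obtain ⟨i₂, hi₂1, hi₂⟩ := stab (fun i => R.ι (tope R (E i))) i₁ hIdec
  have htope_const : ∀ j, i₂ ≤ j → tope R (E j) = tope R (E i₂) := by
    intro j hj
    exact R.ιinj (hi₂ j hj)
  -- derive the contradiction
  set t := tope R (E i₂) with ht
  have hmem : ∀ j, i₂ ≤ j → t = w j ∨ t = w (j + 1) := by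
    intro j hj
    have : t ∈ (E j : Set V) := by
      rw [← htope_const j hj]
      exact tope_mem R (E j)
    rw [hcar j, mem_pair_iff] at this
    exact this
  have h1 := hmem i₂ le_rfl
  have h2 := hmem (i₂ + 2) (by omega)
  rcases h1 with h1 | h1 <;> rcases h2 with h2 | h2 <;>
  · have := hwinj (h1.symm.trans h2)
    omega

end Stmt9Kill
section Stmt9Easy
open Classical

variable {V : Type*} {G : SimpleGraph V}

def edgesAt (G' : G.Subgraph) (y : V) : Set (XE G) :=
  {f | ∃ u, G'.Adj y u ∧ (f : Set V) = {y, u}}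

lemma edgesAt_infinite {G' : G.Subgraph} {y : V} (h : (G'.neighborSet y).Infinite) :
    (edgesAt G' y).Infinite := by
  haveI := h.to_subtype
  refine Set.infinite_of_injective_forall_mem
    (f := fun u : ↥(G'.neighborSet y) => (mkE (G'.adj_sub u.2) : XE G)) ?_ ?_
  · intro u1 u2 h12
    have hc : ({y, (u1 : V)} : Set V) = {y, (u2 : V)} := congrArg Subtype.val h12
    have h1 : (u1 : V) ≠ y := (G'.adj_sub u1.2).ne'
    have h2 : (u2 : V) ≠ y := (G'.adj_sub u2.2).ne' 
    exact Subtype.ext (pair_right_eq h1 h2 hc)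
  · intro u
    exact ⟨u, u.2, rfl⟩

lemma exists_min_φ (φ : XE G → ℕ) (S : Set (XE G)) (hS : S.Nonempty) :
    ∃ f, f ∈ S ∧ ∀ g ∈ S, φ f ≤ φ g := by
  obtain ⟨m, ⟨f, hf, rfl⟩, hmin⟩ := (wellFounded_lt (α := ℕ)).has_min (φ '' S) (hS.image φ)
  exact ⟨f, hf, fun g hg => not_lt.mp (hmin (φ g) ⟨g, hg, rfl⟩)⟩

lemma step_ex {G' : G.Subgraph} {φ : XE G → ℕ} (hφ : Function.Injective φ)
    (hdeg : ∀ v ∈ G'.verts, (G'.neighborSet v).Infinite)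
    {y : V} (hy : y ∈ G'.verts) {S : Set V} (hS : S.Finite) (ℓ : ℕ) :
    ∃ p : V × XE G, G'.Adj y p.1 ∧ p.1 ∉ S ∧ ((p.2 : Set V) = {y, p.1}) ∧ ℓ < φ p.2 := by
  have hinf : (edgesAt G' y).Infinite := edgesAt_infinite (hdeg y hy)
  have hB1 : {f : XE G | φ f ≤ ℓ}.Finite := by
    have : {f : XE G | φ f ≤ ℓ} = φ ⁻¹' (Set.Iic ℓ) := rfl
    rw [this]
    exact Set.Finite.preimage (hφ.injOn) (Set.finite_Iic ℓ)
  haveI : Nonempty V := ⟨y⟩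
  let g : XE G → V := fun f => Classical.epsilon (fun u => (f : Set V) = {y, u})
  have hgspec : ∀ f : XE G, (∃ u, (f : Set V) = {y, u}) → (f : Set V) = {y, g f} :=
    fun f hf => Classical.epsilon_spec hf
  have hB2 : {f : XE G | ∃ u ∈ S, (f : Set V) = {y, u}}.Finite := by
    refine Set.Finite.of_finite_image (f := g) (hS.subset ?_) ?_
    · rintro _ ⟨f, ⟨u, huS, hcar⟩, rfl⟩
      have hgf := hgspec f ⟨u, hcar⟩
      have hu : u ≠ y := (edge_ne f hcar).symm
      have hgfy : g f ≠ y := (edge_ne f hgf).symm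
      have : u = g f := pair_right_eq hu hgfy (hcar.symm.trans hgf)
      exact this ▸ huS
    · rintro f1 ⟨u1, _, hc1⟩ f2 ⟨u2, _, hc2⟩ h12
      have h1 := hgspec f1 ⟨u1, hc1⟩
      have h2 := hgspec f2 ⟨u2, hc2⟩
      rw [h12] at h1
      exact Subtype.ext (h1.trans h2.symm)
  have hA : (edgesAt G' y \ ({f : XE G | φ f ≤ ℓ} ∪ {f | ∃ u ∈ S, (f : Set V) = {y, u}})).Infinite :=
    hinf.diff (hB1.union hB2)
  obtain ⟨f, hfA⟩ := hA.nonempty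
  obtain ⟨⟨u, hadj, hcar⟩, hfbad⟩ := hfA
  rw [Set.mem_union] at hfbad
  push_neg at hfbad
  refine ⟨(u, f), hadj, ?_, hcar, ?_⟩
  · intro huS
    exact hfbad.2 ⟨u, huS, hcar⟩
  · exact not_le.mp hfbad.1

/-- Bundled hypotheses for the easy direction. -/
structure EasyCtx (G' : G.Subgraph) (φ : XE G → ℕ) : Prop where
  hφ : Function.Injective φ
  hne : G'.verts.Nonempty
  hdeg : ∀ v ∈ G'.verts, (G'.neighborSet v).Infinite

variable {G' : G.Subgraph} {φ : XE G → ℕ}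

noncomputable def y0 (C : EasyCtx G' φ) : V := C.hne.some

lemma y0_mem (C : EasyCtx G' φ) : y0 C ∈ G'.verts := C.hne.some_mem

lemma E0_ex (C : EasyCtx G' φ) :
    ∃ f, f ∈ edgesAt G' (y0 C) ∧ ∀ g ∈ edgesAt G' (y0 C), φ f ≤ φ g :=
  exists_min_φ φ _ (edgesAt_infinite (C.hdeg _ (y0_mem C))).nonempty

noncomputable def E0 (C : EasyCtx G' φ) : XE G := (E0_ex C).choose

lemma E0_mem (C : EasyCtx G' φ) : E0 C ∈ edgesAt G' (y0 C) := (E0_ex C).choose_spec.1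

lemma E0_min (C : EasyCtx G' φ) : ∀ g ∈ edgesAt G' (y0 C), φ (E0 C) ≤ φ g :=
  (E0_ex C).choose_spec.2

noncomputable def z0 (C : EasyCtx G' φ) : V := (E0_mem C).choose

lemma z0_spec (C : EasyCtx G' φ) :
    G'.Adj (y0 C) (z0 C) ∧ ((E0 C : Set V) = {y0 C, z0 C}) := (E0_mem C).choose_spec

/-- One step of the path construction. -/
noncomputable def nxt (C : EasyCtx G' φ) (s : V × XE G × Set V) : V × XE G × Set V :=
  if h : s.1 ∈ G'.verts ∧ s.2.2.Finite then
    let p := Classical.choose (step_ex C.hφ C.hdeg h.1 h.2 (φ s.2.1))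
    (p.1, p.2, insert p.1 s.2.2)
  else s

noncomputable def st (C : EasyCtx G' φ) : ℕ → V × XE G × Set V
  | 0 => (y0 C, E0 C, {z0 C, y0 C})
  | n + 1 => nxt C (st C n)

lemma st_step (C : EasyCtx G' φ) (n : ℕ)
    (h : (st C n).1 ∈ G'.verts ∧ (st C n).2.2.Finite) :
    G'.Adj (st C n).1 (st C (n+1)).1 ∧ (st C (n+1)).1 ∉ (st C n).2.2 ∧
      (((st C (n+1)).2.1 : Set V) = {(st C n).1, (st C (n+1)).1}) ∧
      φ (st C n).2.1 < φ (st C (n+1)).2.1 ∧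
      (st C (n+1)).2.2 = insert (st C (n+1)).1 (st C n).2.2 := by
  have hspec := Classical.choose_spec (step_ex C.hφ C.hdeg h.1 h.2 (φ (st C n).2.1))
  have hdef : st C (n+1) = nxt C (st C n) := rfl
  rw [hdef, nxt, dif_pos h]
  exact ⟨hspec.1, hspec.2.1, hspec.2.2.1, hspec.2.2.2, rfl⟩

lemma st_inv (C : EasyCtx G' φ) : ∀ n, (st C n).1 ∈ G'.verts ∧ (st C n).2.2.Finite := by
  intro n
  induction n with
  | zero =>
    exact ⟨y0_mem C, (Set.finite_singleton _).insert _⟩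
  | succ m ih =>
    obtain ⟨hadj, _, _, _, hS⟩ := st_step C m ih
    constructor
    · exact G'.edge_vert (G'.adj_symm hadj)
    · rw [hS]; exact ih.2.insert _

lemma st_full (C : EasyCtx G' φ) (n : ℕ) :
    G'.Adj (st C n).1 (st C (n+1)).1 ∧ (st C (n+1)).1 ∉ (st C n).2.2 ∧
      (((st C (n+1)).2.1 : Set V) = {(st C n).1, (st C (n+1)).1}) ∧
      φ (st C n).2.1 < φ (st C (n+1)).2.1 ∧
      (st C (n+1)).2.2 = insert (st C (n+1)).1 (st C n).2.2 :=
  st_step C n (st_inv C n)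

lemma st_S_mono (C : EasyCtx G' φ) {n m : ℕ} (h : n ≤ m) :
    (st C n).2.2 ⊆ (st C m).2.2 := by
  induction m, h using Nat.le_induction with
  | base => exact subset_rfl
  | succ k hk ih =>
    refine ih.trans ?_
    rw [(st_full C k).2.2.2.2]
    exact Set.subset_insert _ _

lemma st_mem_S (C : EasyCtx G' φ) (n : ℕ) : (st C n).1 ∈ (st C n).2.2 := by
  cases n with
  | zero => show y0 C ∈ ({z0 C, y0 C} : Set V); simp
  | succ m =>
    rw [(st_full C m).2.2.2.2]
    exact Set.mem_insert _ _

lemma st_z0_mem (C : EasyCtx G' φ) (n : ℕ) : z0 C ∈ (st C n).2.2 :=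
  st_S_mono C (Nat.zero_le n) (by show z0 C ∈ ({z0 C, y0 C} : Set V); simp)

lemma st_ne (C : EasyCtx G' φ) {j k : ℕ} (h : j < k) : (st C j).1 ≠ (st C k).1 := by
  intro heq
  obtain ⟨m, rfl⟩ : ∃ m, k = m + 1 := ⟨k - 1, by omega⟩
  have h1 : (st C j).1 ∈ (st C m).2.2 :=
    st_S_mono C (by omega) (st_mem_S C j)
  exact (st_full C m).2.1 (heq ▸ h1)

lemma st_ne_z0 (C : EasyCtx G' φ) (k : ℕ) : (st C k).1 ≠ z0 C := by
  cases k with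
  | zero =>
    have := (z0_spec C).2
    exact (edge_ne (E0 C) this)
  | succ m =>
    intro heq
    exact (st_full C m).2.1 (heq ▸ st_z0_mem C m)

end Stmt9Easy
section Stmt9EasyMain
open Classical

variable {V : Type*} {G : SimpleGraph V}

theorem easy_dir
    (hL : ∃ G' : G.Subgraph, G'.verts.Nonempty ∧
        ∀ v ∈ G'.verts, (G'.neighborSet v).Infinite)
    (φ : XE G → ℕ) (hφ : Function.Injective φ) :
    ∃ (v : ℕ → XE G) (e : ℕ → Set (XE G)),
      IsInfBetaPath (dualEdges (graphEdgeFamily G)) v e ∧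
        ∀ i, φ (v i) < φ (v (i + 1)) := by
  obtain ⟨G', hne, hdeg⟩ := hL
  have C : EasyCtx G' φ := ⟨hφ, hne, hdeg⟩
  set y : ℕ → V := fun k => (st C k).1 with hy
  set Ev : ℕ → XE G := fun k => (st C k).2.1 with hE
  have hcar0 : (Ev 0 : Set V) = {y 0, z0 C} := (z0_spec C).2
  have hcarS : ∀ k, (Ev (k + 1) : Set V) = {y k, y (k + 1)} := fun k => (st_full C k).2.2.1
  have hup : ∀ k, φ (Ev k) < φ (Ev (k + 1)) := fun k => (st_full C k).2.2.2.1
  have hmono : StrictMono fun k => φ (Ev k) := strictMono_nat_of_lt_succ hup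
  have hEinj : Function.Injective Ev := by
    intro a b hab
    by_contra hne'
    rcases lt_or_gt_of_ne hne' with h | h
    · have := hmono h; simp only [hab] at this; omega
    · have := hmono h; simp only [hab] at this; omega
  have hyinj : Function.Injective y := by
    intro a b hab
    by_contra hne'
    rcases lt_or_gt_of_ne hne' with h | h
    · exact st_ne C h hab
    · exact st_ne C h hab.symm
  set e : ℕ → Set (XE G) := fun j => {f : XE G | y j ∈ (f : Set V)} with he
  have hmemiff : ∀ i j, Ev i ∈ e j ↔ (j = i ∨ j + 1 = i) := by
    intro i j
    have : Ev i ∈ e j ↔ y j ∈ (Ev i : Set V) := Iff.rfl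
    rw [this]
    cases i with
    | zero =>
      rw [hcar0, mem_pair_iff]
      constructor
      · rintro (h | h)
        · exact Or.inl (hyinj h)
        · exact absurd h (st_ne_z0 C j)
      · rintro (rfl | h)
        · exact Or.inl rfl
        · omega
    | succ k =>
      rw [hcarS k, mem_pair_iff]
      constructor
      · rintro (h | h)
        · have := hyinj h; omega
        · have := hyinj h; omega
      · rintro (h | h)
        · subst h; exact Or.inr rfl
        · have : j = k := by omega
          subst this; exact Or.inl rfl
  have heinj : Function.Injective e := by
    intro j k hjk
    have hj : Ev (j + 1) ∈ e j := by
      show y j ∈ (Ev (j + 1) : Set V)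
      rw [hcarS j, mem_pair_iff]; exact Or.inl rfl
    have hk : Ev (k + 1) ∈ e k := by
      show y k ∈ (Ev (k + 1) : Set V)
      rw [hcarS k, mem_pair_iff]; exact Or.inl rfl
    have h1 : Ev (j + 1) ∈ e k := hjk ▸ hj
    have h2 : Ev (k + 1) ∈ e j := hjk ▸ hk
    rw [hmemiff] at h1 h2
    omega
  refine ⟨Ev, e, ⟨hEinj, heinj, fun j => ⟨y j, rfl⟩, hmemiff⟩, hup⟩

end Stmt9EasyMain
/-- A countable graph `G` has a subgraph all of whose vertices have infinite
degree iff every injective vertex labeling of the dual `G*` admits an infinite increasing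
β-path. -/
theorem stmt_9 {V : Type*} [Countable V] (G : SimpleGraph V) :
    (∃ G' : G.Subgraph, G'.verts.Nonempty ∧
        ∀ v ∈ G'.verts, (G'.neighborSet v).Infinite) ↔
      (∀ φ : ↥(graphEdgeFamily G) → ℕ, Function.Injective φ →
        ∃ (v : ℕ → ↥(graphEdgeFamily G)) (e : ℕ → Set ↥(graphEdgeFamily G)),
          IsInfBetaPath (dualEdges (graphEdgeFamily G)) v e ∧
            ∀ i, φ (v i) < φ (v (i + 1))) := by
  classical
  constructor
  · intro hL φ hφ
    exact easy_dir hL φ hφ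
  · intro hRHS
    by_contra hL
    by_cases hXne : Nonempty (XE G)
    · obtain ⟨f0⟩ := hXne
      haveI : Nonempty (XE G) := ⟨f0⟩
      haveI hVne : Nonempty V := ⟨f0.2.choose⟩
      -- edge type is countable
      haveI hcnt : Countable (XE G) := by
        obtain ⟨ψ, hψ⟩ := (countable_iff_exists_injective (V × V)).mp inferInstance
        refine (countable_iff_exists_injective (XE G)).mpr ?_
        refine ⟨fun f => ψ (Classical.epsilon (fun p : V × V => (f : Set V) = {p.1, p.2})), ?_⟩
        intro f1 f2 h12
        have h12' := hψ h12
        have hs1 : (f1 : Set V) = {(Classical.epsilon (fun p : V × V => (f1 : Set V) = {p.1, p.2})).1,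
            (Classical.epsilon (fun p : V × V => (f1 : Set V) = {p.1, p.2})).2} := by
          obtain ⟨a, b, _, hab⟩ := f1.2
          exact Classical.epsilon_spec (p := fun p : V × V => (f1 : Set V) = {p.1, p.2}) ⟨(a, b), hab⟩
        have hs2 : (f2 : Set V) = {(Classical.epsilon (fun p : V × V => (f2 : Set V) = {p.1, p.2})).1,
            (Classical.epsilon (fun p : V × V => (f2 : Set V) = {p.1, p.2})).2} := by
          obtain ⟨a, b, _, hab⟩ := f2.2
          exact Classical.epsilon_spec (p := fun p : V × V => (f2 : Set V) = {p.1, p.2}) ⟨(a, b), hab⟩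
        apply Subtype.ext
        rw [hs1, hs2, h12']
      obtain ⟨R⟩ := exists_rankData hL
      obtain ⟨en, hen⟩ := exists_surjective_nat (XE G)
      have htot : ∀ x : XE G, ∃ n, x ∈ EmL R en n := by
        intro x
        obtain ⟨n, hn⟩ := hen x
        exact EmL_total R en x ⟨n, hn.symm⟩
      obtain ⟨v, e, hbeta, hinc⟩ := hRHS (hval R en htot) (hval_inj R en htot)
      set w : ℕ → V := fun j => (hbeta.edges_mem j).choose with hw
      have hespec : ∀ j, e j = {f : XE G | w j ∈ (f : Set V)} := fun j =>
        (hbeta.edges_mem j).choose_spec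
      have hmem' : ∀ i j, w j ∈ ((v i : XE G) : Set V) ↔ (j = i ∨ j + 1 = i) := by
        intro i j
        rw [← hbeta.mem_iff i j, hespec j]
        rfl
      have hwinj : Function.Injective w := by
        intro a b hab
        have : e a = e b := by
          rw [hespec a, hespec b, hab]
        exact hbeta.einj this
      have hcar : ∀ i, ((v (i + 1) : XE G) : Set V) = {w i, w (i + 1)} := by
        intro i
        have h1 : w i ∈ ((v (i + 1) : XE G) : Set V) := (hmem' (i + 1) i).mpr (Or.inr rfl)
        have h2 : w (i + 1) ∈ ((v (i + 1) : XE G) : Set V) :=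
          (hmem' (i + 1) (i + 1)).mpr (Or.inl rfl)
        have hne : w i ≠ w (i + 1) := fun h => by have := hwinj h; omega
        exact pair_eq_of_mem _ h1 h2 hne
      exact kill R en htot ⟨w, fun i => v (i + 1), hwinj, hcar, fun i => hinc (i + 1)⟩
    · -- no edges at all: the β-path cannot exist
      rw [not_nonempty_iff] at hXne
      have hinj : Function.Injective (fun _ : XE G => (0 : ℕ)) := fun a => (hXne.false a).elim
      obtain ⟨v, _, _, _⟩ := hRHS _ hinj
      exact (hXne.false (v 0)).elim
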